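/- arXiv:math/9911018 — 2 statements merged into one kernel-verified Lean document; each statement's English description precedes it below -/
import Mathlib

section
/- For a ∈ ℂ*, the kernel of the evaluation morphism ev_a : OA → sl₂, p(t)⊗x ↦ p(a)x, equals the ideal I_{U_a(t)}; moreover the image of ev_a is the one-dimensional span of e+f if a = ±1, and is all of sl₂ if a ≠ ±1. -/
open LaurentPolynomial

noncomputable section

namespace Onsager

attribute [local instance 100] LieRing.ofAssociativeRing

/-- Laurent polynomials over ℂ, i.e. the ring `ℂ[t,t⁻¹]`. -/
abbrev R : Type := LaurentPolynomial ℂ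

/-- The involution `t ↦ t⁻¹` of `ℂ[t,t⁻¹]`. -/
abbrev inv : R ≃ₐ[ℂ] R := LaurentPolynomial.invert

/-- The loop algebra of `gl₂`: 2×2 matrices over `ℂ[t,t⁻¹]`.  The loop algebra
`L(sl₂) = ℂ[t,t⁻¹] ⊗ sl₂` is its Lie subalgebra of traceless matrices. -/
abbrev Loop : Type := Matrix (Fin 2) (Fin 2) R

/-- The standard generator `e` of `sl₂`, viewed inside the loop algebra. -/
def e : Loop := !![0, 1; 0, 0]
/-- The standard generator `f` of `sl₂`. -/
def f : Loop := !![0, 0; 1, 0]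
/-- The standard generator `h` of `sl₂`. -/
def h : Loop := !![1, 0; 0, -1]

/-- The element `p(t)e + q(t)f + r(t)h` of the loop algebra. -/
def elt (p q r : R) : Loop := p • e + q • f + r • h

lemma elt_eq (p q r : R) : elt p q r = !![r, p; q, -r] := by
  ext i j
  fin_cases i <;> fin_cases j <;> simp [elt, e, f, h]

/-- The swap matrix implementing the involution `θ` of `sl₂`. -/
def Sw : Loop := !![0, 1; 1, 0]

/-- The involution `θ̂` of the loop algebra, `θ̂(p(t) ⊗ x) = p(t⁻¹) ⊗ θ(x)`,
where `θ(e) = f`, `θ(f) = e`, `θ(h) = -h`. -/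
def thetaHat (x : Loop) : Loop := Sw * x.map inv * Sw

lemma Sw_mul_Sw : Sw * Sw = 1 := by
  ext i j
  fin_cases i <;> fin_cases j <;>
    simp [Sw, Matrix.mul_apply, Fin.sum_univ_two, Matrix.one_apply]

lemma map_inv_eq (x : Loop) : x.map inv = (AlgEquiv.mapMatrix (R := ℂ) inv) x := rfl

lemma thetaHat_mul (x y : Loop) : thetaHat (x * y) = thetaHat x * thetaHat y := by
  simp only [thetaHat, map_inv_eq, map_mul]
  calc Sw * (inv.mapMatrix x * inv.mapMatrix y) * Sw
      = Sw * inv.mapMatrix x * (Sw * Sw) * (inv.mapMatrix y * Sw) := by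
        rw [Sw_mul_Sw]; noncomm_ring
    _ = Sw * inv.mapMatrix x * Sw * (Sw * (inv.mapMatrix y * Sw)) := by noncomm_ring
    _ = _ := by noncomm_ring

lemma thetaHat_add (x y : Loop) : thetaHat (x + y) = thetaHat x + thetaHat y := by
  simp only [thetaHat, map_inv_eq, map_add, mul_add, add_mul]

lemma thetaHat_sub (x y : Loop) : thetaHat (x - y) = thetaHat x - thetaHat y := by
  simp only [thetaHat, map_inv_eq, map_sub, mul_sub, sub_mul]

lemma thetaHat_smul (c : ℂ) (x : Loop) : thetaHat (c • x) = c • thetaHat x := by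
  simp only [thetaHat, map_inv_eq, map_smul, Matrix.smul_mul, Matrix.mul_smul]

/-- The Onsager algebra, realized as the subalgebra of the loop algebra of `sl₂`
fixed by the involution `θ̂`. -/
def OASub : LieSubalgebra ℂ Loop where
  carrier := {x | thetaHat x = x ∧ Matrix.trace x = 0}
  add_mem' := by
    rintro x y ⟨hx1, hx2⟩ ⟨hy1, hy2⟩
    exact ⟨by rw [thetaHat_add, hx1, hy1], by simp [hx2, hy2]⟩
  zero_mem' := by
    constructor
    · have := thetaHat_smul 0 0
      simpa using this
    · simp
  smul_mem' := by
    rintro c x ⟨hx1, hx2⟩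
    exact ⟨by rw [thetaHat_smul, hx1], by simp [hx2]⟩
  lie_mem' := by
    rintro x y ⟨hx1, hx2⟩ ⟨hy1, hy2⟩
    constructor
    · rw [Ring.lie_def, thetaHat_sub, thetaHat_mul, thetaHat_mul, hx1, hy1]
    · rw [Ring.lie_def]
      simp [Matrix.trace_mul_comm x y]

/-- The Onsager algebra as a type (a Lie algebra over ℂ). -/
abbrev OA : Type := ↥OASub

/-- For a polynomial `P(t)`, the ideal `I_P` of the Onsager algebra consisting of the
elements `p(t)e + p(t⁻¹)f + q(t)h` with `P | p` and `P | q`. -/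
def IP (P : Polynomial ℂ) : LieIdeal ℂ OA where
  carrier := {X | ∀ i j, P.toLaurent ∣ (X : Loop) i j}
  add_mem' := by
    intro x y hx hy i j
    simpa using dvd_add (hx i j) (hy i j)
  zero_mem' := by intro i j; simp
  smul_mem' := by
    intro c x hx i j
    have : ((c • x : OA) : Loop) i j = c • ((x : Loop) i j) := rfl
    rw [this, Algebra.smul_def]
    exact (hx i j).mul_left _
  lie_mem := by
    intro x m hm i j
    have hco : ((⁅x, m⁆ : OA) : Loop) = ⁅(x : Loop), (m : Loop)⁆ := rfl
    rw [hco, Ring.lie_def]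
    have h1 : P.toLaurent ∣ ((x : Loop) * (m : Loop)) i j := by
      rw [Matrix.mul_apply]
      exact Finset.dvd_sum fun k _ => (hm k j).mul_left _
    have h2 : P.toLaurent ∣ ((m : Loop) * (x : Loop)) i j := by
      rw [Matrix.mul_apply]
      exact Finset.dvd_sum fun k _ => (hm i k).mul_right _
    simpa using dvd_sub h1 h2

/-- A nonconstant monic polynomial `P` of degree `d` is *reciprocal* if
`P(t) = ± t^d P(t⁻¹)`. -/
def IsReciprocal (P : Polynomial ℂ) : Prop :=
  P.Monic ∧ 0 < P.natDegree ∧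
    (P.toLaurent = T (P.natDegree : ℤ) * inv P.toLaurent ∨
     P.toLaurent = -(T (P.natDegree : ℤ) * inv P.toLaurent))

/-- The elementary reciprocal polynomial `U_a`. -/
def U (a : ℂ) : Polynomial ℂ :=
  if a = 1 ∨ a = -1 then Polynomial.X - Polynomial.C a
  else Polynomial.X ^ 2 - Polynomial.C (a + a⁻¹) * Polynomial.X + 1

/-- Evaluation of a Laurent polynomial at a nonzero complex number. -/
def evalL (a : ℂ) (p : R) : ℂ := (AddMonoidAlgebra.coeff p).sum fun n c => c * a ^ n

/-- Evaluation `ev_a` of loop-algebra elements at `t = a`. -/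
def ev (a : ℂ) (x : Loop) : Matrix (Fin 2) (Fin 2) ℂ := x.map (evalL a)

/-- The element `A_m = 2t^m e + 2t^{-m} f` of the loop algebra. -/
def AmL (m : ℤ) : Loop := elt (2 * T m) (2 * T (-m)) 0

/-- The element `G_m = (t^m - t^{-m}) h` of the loop algebra. -/
def GmL (m : ℤ) : Loop := elt 0 0 (T m - T (-m))

lemma thetaHat_elt (p q r : R) :
    thetaHat (elt p q r) = elt (inv q) (inv p) (-(inv r)) := by
  rw [elt_eq, elt_eq]
  have hmap : (!![r, p; q, -r] : Loop).map ⇑inv = !![inv r, inv p; inv q, -(inv r)] := by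
    ext i j
    fin_cases i <;> fin_cases j <;> simp [Matrix.map_apply]
  rw [thetaHat, hmap, Sw]
  ext i j
  fin_cases i <;> fin_cases j <;>
    simp [Matrix.mul_apply, Fin.sum_univ_two]

lemma elt_mem (p r : R) (hr : inv r = -r) : elt p (inv p) r ∈ OASub := by
  constructor
  · rw [thetaHat_elt, hr, neg_neg, LaurentPolynomial.involutive_invert p]
  · rw [elt_eq]
    simp [Matrix.trace_fin_two]

/-- `A_m` as an element of the Onsager algebra. -/
def Am (m : ℤ) : OA :=
  ⟨AmL m, by
    have h2 : inv (2 * T m : R) = 2 * T (-m) := by simp [map_ofNat]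
    have hm := elt_mem (2 * T m) 0 (by simp)
    rw [h2] at hm
    exact hm⟩

/-- `G_m` as an element of the Onsager algebra. -/
def Gm (m : ℤ) : OA :=
  ⟨GmL m, by
    have hm := elt_mem 0 (T m - T (-m)) (by simp [neg_sub])
    rw [map_zero] at hm
    exact hm⟩


def evalHom (a : ℂˣ) : R →ₐ[ℂ] ℂ :=
  AddMonoidAlgebra.lift ℂ ℂ ℤ ((Units.coeHom ℂ).comp (zpowersHom ℂˣ a))

lemma evalHom_T (a : ℂˣ) (n : ℤ) : evalHom a (T n) = (a : ℂ) ^ n := by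
  rw [evalHom, T, AddMonoidAlgebra.lift_single]
  simp [zpowersHom_apply]

lemma evalHom_C (a : ℂˣ) (c : ℂ) : evalHom a (LaurentPolynomial.C c) = c := by
  rw [LaurentPolynomial.C_eq_algebraMap]; exact (evalHom a).commutes c

lemma evalL_eq (a : ℂˣ) (p : R) : evalL (a : ℂ) p = evalHom a p := by
  rw [evalHom, AddMonoidAlgebra.lift_apply, evalL]
  congr 1; ext n c
  simp [zpowersHom_apply, mul_comm, smul_eq_mul]

lemma evalHom_toLaurent (a : ℂˣ) (P : Polynomial ℂ) :
    evalHom a (P.toLaurent) = P.eval (a : ℂ) := by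
  have : (evalHom a).comp Polynomial.toLaurentAlg = Polynomial.aeval (a : ℂ) := by
    apply Polynomial.algHom_ext
    simp [Polynomial.toLaurentAlg_apply, evalHom_T]
  have h2 := DFunLike.congr_fun this P
  simpa [Polynomial.toLaurentAlg_apply] using h2

lemma evalHom_invert (a : ℂˣ) (p : R) : evalHom a (inv p) = evalHom a⁻¹ p := by
  have : (evalHom a).comp inv.toAlgHom = evalHom a⁻¹ := by
    apply AddMonoidAlgebra.algHom_ext
    intro n
    have hn : (AddMonoidAlgebra.single n (1:ℂ) : R) = T n := by rw [T]
    simp [hn, evalHom_T, zpow_neg]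
    exact Subsingleton.elim _ _
  exact DFunLike.congr_fun this p

lemma U_eval_self (a : ℂ) (ha : a ≠ 0) : (U a).eval a = 0 := by
  rw [U]; split_ifs with hcase
  · simp
  · simp only [Polynomial.eval_add, Polynomial.eval_sub, Polynomial.eval_mul, Polynomial.eval_pow, Polynomial.eval_X, Polynomial.eval_C, Polynomial.eval_one]
    field_simp; ring

lemma U_eval_inv (a : ℂ) (ha : a ≠ 0) : (U a).eval a⁻¹ = 0 := by
  rw [U]; split_ifs with hcase
  · rcases hcase with h | h <;> simp [h] <;> norm_num
  · simp only [Polynomial.eval_add, Polynomial.eval_sub, Polynomial.eval_mul, Polynomial.eval_pow, Polynomial.eval_X, Polynomial.eval_C, Polynomial.eval_one]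
    field_simp; ring

lemma key (a : ℂ) (ha : a ≠ 0) (p : R) :
    (U a).toLaurent ∣ p ↔
      (evalHom (Units.mk0 a ha) p = 0 ∧ evalHom (Units.mk0 a ha)⁻¹ p = 0) := by
  set au := Units.mk0 a ha with hau
  have hcoe : (au : ℂ) = a := rfl
  have hcoeinv : ((au⁻¹ : ℂˣ) : ℂ) = a⁻¹ := by simp [hau]
  constructor
  · rintro ⟨q, rfl⟩
    constructor <;> simp [map_mul, evalHom_toLaurent, hcoe, hcoeinv, U_eval_self a ha, U_eval_inv a ha]
  · rintro ⟨h1, h2⟩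
    obtain ⟨n, P, hP⟩ := p.exists_T_pow
    have he1 : P.eval a = 0 := by
      have := evalHom_toLaurent au P
      rw [hP, map_mul, h1, zero_mul, hcoe] at this
      exact this.symm
    have he2 : P.eval a⁻¹ = 0 := by
      have := evalHom_toLaurent au⁻¹ P
      rw [hP, map_mul, h2, zero_mul, hcoeinv] at this
      exact this.symm
    have hUP : U a ∣ P := by
      rw [U]; split_ifs with hcase
      · rw [Polynomial.dvd_iff_isRoot]
        simpa [Polynomial.IsRoot] using he1
      · have hne : a ≠ a⁻¹ := by
          intro h
          apply hcase
          have hsq : a * a = 1 := by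
            nth_rewrite 1 [h]; exact inv_mul_cancel₀ ha
          exact mul_self_eq_one_iff.mp hsq
        have hfac : Polynomial.X ^ 2 - Polynomial.C (a + a⁻¹) * Polynomial.X + 1
            = (Polynomial.X - Polynomial.C a) * (Polynomial.X - Polynomial.C a⁻¹) := by
          have hC : (Polynomial.C a) * (Polynomial.C a⁻¹) = 1 := by
            rw [← Polynomial.C_mul, mul_inv_cancel₀ ha, Polynomial.C_1]
          have : Polynomial.C (a + a⁻¹) = Polynomial.C a + Polynomial.C a⁻¹ := by
            rw [Polynomial.C_add]
          rw [this]
          ring_nf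
          rw [← hC]
          ring
        rw [hfac]
        have hunit : IsUnit (a - a⁻¹) := (sub_ne_zero_of_ne hne).isUnit
        exact IsCoprime.mul_dvd (Polynomial.isCoprime_X_sub_C_of_isUnit_sub hunit)
          ((Polynomial.dvd_iff_isRoot).2 he1) ((Polynomial.dvd_iff_isRoot).2 he2)
    have : (U a).toLaurent ∣ P.toLaurent := map_dvd _ hUP
    rw [hP] at this
    exact (((isUnit_T (n:ℤ)).dvd_mul_right).mp this)


lemma thetaHat_apply (x : Loop) (i j : Fin 2) : thetaHat x i j = inv (x (1 - i) (1 - j)) := by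
  fin_cases i <;> fin_cases j <;>
    simp [thetaHat, Sw, Matrix.mul_apply, Fin.sum_univ_two, Matrix.map_apply,
      Matrix.vecMul, dotProduct]

lemma OA_symm (X : OA) (i j : Fin 2) :
    inv ((X : Loop) i j) = (X : Loop) (1 - i) (1 - j) := by
  have hX : thetaHat (X : Loop) = (X : Loop) := X.2.1
  have h1 := thetaHat_apply (X : Loop) i j
  rw [hX] at h1
  have := congrArg inv h1
  rwa [LaurentPolynomial.involutive_invert] at this

lemma ev_apply (a : ℂ) (x : Loop) (i j : Fin 2) : ev a x i j = evalL a (x i j) := rfl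

/-- **Lemma 4 of Date–Roan.**  For `a ∈ ℂ*`, the kernel of the evaluation morphism
`ev_a : OA → sl₂` equals `I_{U_a}`; its image is the line spanned by `e + f` if
`a = ±1`, and is all of `sl₂` (the traceless matrices) otherwise. -/
theorem eval_kernel_and_image (a : ℂ) (ha : a ≠ 0) :
    (∀ X : OA, ev a (X : Loop) = 0 ↔ X ∈ IP (U a)) ∧
    ((a = 1 ∨ a = -1) →
        Set.range (fun X : OA => ev a (X : Loop)) =
          (Submodule.span ℂ {(!![0, 1; 1, 0] : Matrix (Fin 2) (Fin 2) ℂ)} :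
            Submodule ℂ (Matrix (Fin 2) (Fin 2) ℂ))) ∧
    (¬(a = 1 ∨ a = -1) →
        Set.range (fun X : OA => ev a (X : Loop)) =
          {x : Matrix (Fin 2) (Fin 2) ℂ | Matrix.trace x = 0}) := by
  set au := Units.mk0 a ha with hau
  have hcoe : (au : ℂ) = a := rfl
  have hcoeinv : ((au⁻¹ : ℂˣ) : ℂ) = a⁻¹ := by simp [hau]
  have hev : ∀ (x : Loop) (i j : Fin 2), ev a x i j = evalHom au (x i j) := by
    intro x i j; rw [ev_apply, ← hcoe, evalL_eq]
  have hinv : ∀ (X : OA) (i j : Fin 2),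
      evalHom au⁻¹ ((X : Loop) i j) = evalHom au ((X : Loop) (1 - i) (1 - j)) := by
    intro X i j
    rw [← OA_symm X i j, evalHom_invert]
  have htr : ∀ X : OA, (X : Loop) 1 1 = -((X : Loop) 0 0) := by
    intro X
    have h2 := X.2.2
    rw [Matrix.trace_fin_two] at h2
    linear_combination h2
  refine ⟨?_, ?_, ?_⟩
  · intro X
    have hmem : X ∈ IP (U a) ↔ ∀ i j, (U a).toLaurent ∣ (X : Loop) i j := Iff.rfl
    rw [hmem]
    constructor
    · intro h0
      have hz : ∀ i j, evalHom au ((X : Loop) i j) = 0 := by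
        intro i j
        have := congrFun (congrFun h0 i) j
        rw [hev] at this
        exact this
      intro i j
      rw [key a ha]
      refine ⟨hz i j, ?_⟩
      rw [hinv X i j]
      exact hz _ _
    · intro hX
      ext i j
      obtain ⟨q, hq⟩ := hX i j
      rw [hev, hq, map_mul, evalHom_toLaurent, hcoe, U_eval_self a ha, zero_mul]
      simp
  · intro h1
    have hainv : a⁻¹ = a := by
      rcases h1 with h | h <;> rw [h] <;> norm_num
    have hauinv : au⁻¹ = au := by
      ext
      rw [hcoeinv, hcoe, hainv]
    apply Set.Subset.antisymm
    · rintro _ ⟨X, rfl⟩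
      have hdiag : evalHom au ((X : Loop) 0 0) = 0 := by
        have h00 := hinv X 0 0
        rw [hauinv] at h00
        have h11 : ((X : Loop) (1 - 0) (1 - 0)) = -((X : Loop) 0 0) := htr X
        rw [h11, map_neg] at h00
        linear_combination h00 / 2
      have hoff : evalHom au ((X : Loop) 1 0) = evalHom au ((X : Loop) 0 1) := by
        have h01 := hinv X 0 1
        rw [hauinv] at h01
        exact h01.symm
      rw [SetLike.mem_coe, Submodule.mem_span_singleton]
      refine ⟨evalHom au ((X : Loop) 0 1), ?_⟩
      ext i j
      fin_cases i <;> fin_cases j <;>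
        simp [hev, Matrix.smul_apply, hdiag, hoff, htr X, map_neg]
    · intro x hx
      rw [SetLike.mem_coe, Submodule.mem_span_singleton] at hx
      obtain ⟨c, rfl⟩ := hx
      have member : elt (LaurentPolynomial.C c) (LaurentPolynomial.C c) 0 ∈ OASub := by
        have hm := elt_mem (LaurentPolynomial.C c) 0 (by simp)
        rwa [show (inv (LaurentPolynomial.C c) : R) = LaurentPolynomial.C c from
          LaurentPolynomial.invert_C c] at hm
      refine ⟨⟨elt (LaurentPolynomial.C c) (LaurentPolynomial.C c) 0, member⟩, ?_⟩
      show ev a (elt (LaurentPolynomial.C c) (LaurentPolynomial.C c) 0) = _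
      ext i j
      fin_cases i <;> fin_cases j <;>
        simp [hev, elt_eq, evalHom_C, Matrix.smul_apply]
  · intro hno
    have hd : a - a⁻¹ ≠ 0 := by
      intro h
      apply hno
      have hsq : a * a = 1 := by
        have h' : a = a⁻¹ := by linear_combination h
        nth_rewrite 1 [h']
        exact inv_mul_cancel₀ ha
      exact mul_self_eq_one_iff.mp hsq
    apply Set.Subset.antisymm
    · rintro _ ⟨X, rfl⟩
      show Matrix.trace (ev a (X : Loop)) = 0
      rw [Matrix.trace_fin_two, hev, hev, ← map_add]
      have h2 := X.2.2
      rw [Matrix.trace_fin_two] at h2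
      rw [h2, map_zero]
    · intro x hx
      have h2 : x 0 0 + x 1 1 = 0 := by
        have := hx
        rwa [Set.mem_setOf_eq, Matrix.trace_fin_two] at this
      set α := x 0 0 with hα
      set β := x 0 1 with hβ
      set γ := x 1 0 with hγ
      set s := (β - γ) / (a - a⁻¹) with hs
      set p : R := LaurentPolynomial.C s * T 1 + LaurentPolynomial.C (β - s * a) with hp
      set r : R := LaurentPolynomial.C (α / (a - a⁻¹)) * (T 1 - T (-1)) with hrdef
      have hr : inv r = -r := by
        rw [hrdef, map_mul, map_sub]
        simp only [LaurentPolynomial.invert_C, LaurentPolynomial.invert_T, neg_neg]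
        ring
      refine ⟨⟨elt p (inv p) r, elt_mem p r hr⟩, ?_⟩
      show ev a (elt p (inv p) r) = x
      have haa : a * a - 1 ≠ 0 := by
        intro h
        apply hd
        field_simp
        linear_combination h
      have hepr : evalHom au r = α := by
        rw [hrdef, map_mul, map_sub, evalHom_C, evalHom_T, evalHom_T, hcoe]
        rw [zpow_one, zpow_neg_one]
        field_simp
        exact mul_div_cancel_right₀ α (by rwa [sq] : a ^ 2 - 1 ≠ 0)
      have hepp : evalHom au p = β := by
        rw [hp, map_add, map_mul, evalHom_C, evalHom_C, evalHom_T, hcoe, zpow_one]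
        ring
      have heppinv : evalHom au (inv p) = γ := by
        rw [evalHom_invert, hp, map_add, map_mul, evalHom_C, evalHom_C, evalHom_T,
          hcoeinv, zpow_one]
        rw [hs]
        linear_combination (γ - β) * mul_inv_cancel₀ hd
      have h11 : x 1 1 = -α := by linear_combination h2
      ext i j
      fin_cases i <;> fin_cases j <;>
        simp [hev, elt_eq, map_neg, hepr, hepp, heppinv, h11] <;> rfl


end Onsager
end
end

section
/- In OA_L = OA/I_{(t−1)^L}, there exist unique elements X̲_k, Y̲_k (0 ≤ k < L) such that the images of A_m and G_m satisfy π_L(A_m) = Σ_{k=0}^{L−1} C(m,k) X̲_k and π_L(G_m) = Σ_{k=0}^{L−1} (−1)^k C(m,k) Y̲_k for all m ∈ ℤ, where C(m,k) is the binomial coefficient; moreover Y̲_k = ((−1)^k/4)[X̲_k, X̲_0]. -/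
open LaurentPolynomial

noncomputable section

namespace Onsager

attribute [local instance 100] LieRing.ofAssociativeRing

/-- The generalized binomial coefficient `C(m,k) = m(m-1)⋯(m-k+1)/k!` for `m ∈ ℤ`. -/
def zbinom (m : ℤ) (k : ℕ) : ℂ :=
  (∏ i ∈ Finset.range k, ((m : ℂ) - (i : ℂ))) / (k.factorial : ℂ)

/- ===== auxiliary development ===== -/

/-- `s₁ = t - 1`. -/
def s1 : R := T 1 - 1
/-- `s₂ = t⁻¹ - 1`. -/
def s2 : R := T (-1) - 1

lemma inv_s1 : inv s1 = s2 := by simp [s1, s2]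

lemma inv_s2 : inv s2 = s1 := by simp [s1, s2]

lemma s2_eq : s2 = -T (-1) * s1 := by
  have h : (T (-1) : R) * T 1 = 1 := by
    rw [← T_add]; norm_num
  unfold s1 s2
  rw [neg_mul, mul_sub, h, mul_one, neg_sub]

lemma T1_eq : (T 1 : R) = s1 + 1 := by simp [s1]

lemma smul_eq_C_mul (c : ℂ) (x : R) : c • x = LaurentPolynomial.C c * x := by
  rw [Algebra.smul_def, LaurentPolynomial.algebraMap_apply]
  simp

lemma zbinom_zero (m : ℤ) : zbinom m 0 = 1 := by simp [zbinom]

lemma zbinom_nat_lt {n k : ℕ} (h : n < k) : zbinom (n : ℤ) k = 0 := by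
  unfold zbinom
  have h0 : (((n : ℤ) : ℂ) - ((n : ℕ) : ℂ)) = 0 := by push_cast; ring
  rw [Finset.prod_eq_zero (Finset.mem_range.2 h) h0, zero_div]

lemma prod_succ_shift (x : ℂ) (k : ℕ) :
    ∏ i ∈ Finset.range (k + 1), (x + 1 - (i : ℂ)) =
      (x + 1) * ∏ i ∈ Finset.range k, (x - (i : ℂ)) := by
  rw [Finset.prod_range_succ' (fun i => x + 1 - (i : ℂ)) k]
  have h1 : ∀ i ∈ Finset.range k, x + 1 - ((i + 1 : ℕ) : ℂ) = x - (i : ℂ) := by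
    intro i _; push_cast; ring
  rw [Finset.prod_congr rfl h1]
  push_cast
  ring

lemma zbinom_pascal (m : ℤ) (k : ℕ) :
    zbinom (m + 1) (k + 1) = zbinom m (k + 1) + zbinom m k := by
  unfold zbinom
  have hc : ∀ i : ℕ, (((m + 1 : ℤ)) : ℂ) - (i : ℂ) = ((m : ℂ)) + 1 - (i : ℂ) := by
    intro i; push_cast; ring
  rw [Finset.prod_congr rfl (fun i _ => hc i), prod_succ_shift,
    Finset.prod_range_succ (fun i => ((m : ℤ) : ℂ) - (i : ℂ)) k, Nat.factorial_succ]
  have h1 : (k.factorial : ℂ) ≠ 0 := Nat.cast_ne_zero.2 k.factorial_ne_zero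
  have h2 : ((k : ℂ) + 1) ≠ 0 := by
    have := Nat.cast_add_one_ne_zero (R := ℂ) k
    simpa using this
  push_cast
  field_simp
  ring

lemma zbinom_self (n : ℕ) : zbinom (n : ℤ) n = 1 := by
  induction n with
  | zero => simp [zbinom]
  | succ n ih =>
    have hc : ((n + 1 : ℕ) : ℤ) = (n : ℤ) + 1 := by push_cast; ring
    rw [hc, zbinom_pascal, zbinom_nat_lt (Nat.lt_succ_self n), zero_add, ih]

/-- The defect `D_m = t^m - ∑_{k<L} C(m,k)(t-1)^k`. -/
def DD (L : ℕ) (m : ℤ) : R :=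
  T m - ∑ k ∈ Finset.range L, LaurentPolynomial.C (zbinom m k) * s1 ^ k

lemma invert_DD (L : ℕ) (m : ℤ) :
    inv (DD L m) = T (-m) - ∑ k ∈ Finset.range L, LaurentPolynomial.C (zbinom m k) * s2 ^ k := by
  unfold DD
  rw [map_sub, map_sum, invert_T]
  congr 1
  refine Finset.sum_congr rfl fun k _ => ?_
  rw [map_mul, map_pow, invert_C, inv_s1]

lemma sum_pascal (m : ℤ) (n : ℕ) :
    ∑ k ∈ Finset.range (n + 1), LaurentPolynomial.C (zbinom (m + 1) k) * s1 ^ k =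
      (s1 + 1) * ∑ k ∈ Finset.range (n + 1), LaurentPolynomial.C (zbinom m k) * s1 ^ k
        - LaurentPolynomial.C (zbinom m n) * s1 ^ (n + 1) := by
  induction n with
  | zero => simp [zbinom_zero]
  | succ n ih =>
    rw [Finset.sum_range_succ, ih,
      Finset.sum_range_succ (fun k => LaurentPolynomial.C (zbinom m k) * s1 ^ k) (n + 1),
      zbinom_pascal, map_add]
    ring

lemma DD_step (n : ℕ) (m : ℤ) :
    DD (n + 1) (m + 1) = (s1 + 1) * DD (n + 1) m
      + LaurentPolynomial.C (zbinom m n) * s1 ^ (n + 1) := by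
  unfold DD
  rw [sum_pascal]
  have hT : (T (m + 1) : R) = (s1 + 1) * T m := by
    rw [← T1_eq, ← T_add]; ring_nf
  rw [hT]
  ring

lemma DD_zero (n : ℕ) : DD (n + 1) 0 = 0 := by
  unfold DD
  rw [Finset.sum_range_succ' (fun k => LaurentPolynomial.C (zbinom 0 k) * s1 ^ k) n]
  have h1 : ∀ k ∈ Finset.range n, LaurentPolynomial.C (zbinom 0 (k + 1)) * s1 ^ (k + 1) = 0 := by
    intro k _
    have : zbinom (0 : ℤ) (k + 1) = 0 := by
      have := zbinom_nat_lt (n := 0) (k := k + 1) (Nat.succ_pos k)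
      simpa using this
    rw [this, map_zero, zero_mul]
  rw [Finset.sum_congr rfl h1]
  simp [zbinom_zero]

lemma key_dvd (L : ℕ) (hL : 0 < L) (m : ℤ) : s1 ^ L ∣ DD L m := by
  obtain ⟨n, rfl⟩ : ∃ n, L = n + 1 := ⟨L - 1, (Nat.succ_pred_eq_of_pos hL).symm⟩
  induction m using Int.induction_on with
  | zero => rw [DD_zero]; exact dvd_zero _
  | succ i ih =>
    rw [DD_step]
    exact dvd_add (ih.mul_left _) (dvd_mul_left _ _)
  | pred i ih =>
    have hstep := DD_step n (-(i : ℤ) - 1)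
    have heq : (-(i : ℤ) - 1) + 1 = -(i : ℤ) := by ring
    rw [heq] at hstep
    have hd : s1 ^ (n + 1) ∣ (s1 + 1) * DD (n + 1) (-(i : ℤ) - 1) := by
      have : (s1 + 1) * DD (n + 1) (-(i : ℤ) - 1) =
          DD (n + 1) (-(i : ℤ)) - LaurentPolynomial.C (zbinom (-(i : ℤ) - 1) n) * s1 ^ (n + 1) := by
        rw [hstep]; ring
      rw [this]
      exact dvd_sub ih (dvd_mul_left _ _)
    have hu : IsUnit (s1 + 1 : R) := by
      rw [← T1_eq]; exact isUnit_T 1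
    rwa [IsUnit.dvd_mul_left hu] at hd

lemma key_dvd' (L : ℕ) (hL : 0 < L) (m : ℤ) : s1 ^ L ∣ inv (DD L m) := by
  have h1 : s1 ^ L ∣ s2 ^ L := by
    rw [s2_eq, mul_pow]
    exact dvd_mul_left _ _
  have h2 : s2 ^ L ∣ inv (DD L m) := by
    have := map_dvd inv (key_dvd L hL m)
    rwa [map_pow, inv_s1] at this
  exact h1.trans h2

/-- The element `X_k = 2(t-1)^k e + 2(t⁻¹-1)^k f` of the Onsager algebra. -/
def Xe (k : ℕ) : OA :=
  ⟨elt (2 * s1 ^ k) (2 * s2 ^ k) 0, by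
    have h : inv (2 * s1 ^ k) = 2 * s2 ^ k := by
      rw [map_mul, map_pow, inv_s1]
      simp [map_ofNat]
    have hm := elt_mem (2 * s1 ^ k) 0 (by simp)
    rwa [h] at hm⟩

/-- The element `Y_k = (-1)^k ((t-1)^k - (t⁻¹-1)^k) h` of the Onsager algebra. -/
def Ye (k : ℕ) : OA :=
  ⟨elt 0 0 (LaurentPolynomial.C ((-1 : ℂ) ^ k) * (s1 ^ k - s2 ^ k)), by
    have hm := elt_mem 0 (LaurentPolynomial.C ((-1 : ℂ) ^ k) * (s1 ^ k - s2 ^ k)) (by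
      simp only [map_mul, invert_C, map_sub, map_pow, inv_s1, inv_s2]
      ring)
    rwa [map_zero] at hm⟩

/-- The matrix-entry linear map on the Onsager algebra. -/
def entryL (i j : Fin 2) : OA →ₗ[ℂ] R where
  toFun X := (X : Loop) i j
  map_add' _ _ := rfl
  map_smul' _ _ := rfl

@[simp] lemma entryL_apply (i j : Fin 2) (X : OA) : entryL i j X = (X : Loop) i j := rfl

lemma Am_coe (m : ℤ) : ((Am m : OA) : Loop) = !![0, 2 * T m; 2 * T (-m), 0] := by
  show AmL m = _
  rw [AmL, elt_eq, neg_zero]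

lemma Gm_coe (m : ℤ) :
    ((Gm m : OA) : Loop) = !![T m - T (-m), 0; 0, -(T m - T (-m))] := by
  show GmL m = _
  rw [GmL, elt_eq]

lemma Xe_coe (k : ℕ) : ((Xe k : OA) : Loop) = !![0, 2 * s1 ^ k; 2 * s2 ^ k, 0] := by
  show elt _ _ _ = _
  rw [elt_eq, neg_zero]

lemma Ye_coe (k : ℕ) :
    ((Ye k : OA) : Loop) =
      !![LaurentPolynomial.C ((-1 : ℂ) ^ k) * (s1 ^ k - s2 ^ k), 0; 0,
        -(LaurentPolynomial.C ((-1 : ℂ) ^ k) * (s1 ^ k - s2 ^ k))] := by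
  show elt _ _ _ = _
  rw [elt_eq]

lemma mem_IP_iff {P : Polynomial ℂ} {x : OA} :
    x ∈ IP P ↔ ∀ i j, P.toLaurent ∣ (x : Loop) i j := Iff.rfl

lemma toLaurent_pow (L : ℕ) :
    ((Polynomial.X - 1 : Polynomial ℂ) ^ L).toLaurent = s1 ^ L := by
  rw [map_pow, map_sub, Polynomial.toLaurent_X, map_one]
  rfl

/-- Linear independence of the binomial coefficient functions. -/
lemma lin_indep {M : Type*} [AddCommGroup M] [Module ℂ M] {L : ℕ} (v : Fin L → M)
    (hv : ∀ m : ℤ, ∑ k : Fin L, zbinom m (k : ℕ) • v k = 0) : ∀ k, v k = 0 := by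
  suffices H : ∀ n : ℕ, ∀ k : Fin L, (k : ℕ) = n → v k = 0 by
    intro k; exact H k k rfl
  intro n
  induction n using Nat.strong_induction_on with
  | _ n IH =>
    intro k hk
    have h := hv (n : ℤ)
    rw [Finset.sum_eq_single k] at h
    · rw [hk, zbinom_self, one_smul] at h
      exact h
    · intro j _ hj
      rcases lt_trichotomy ((j : ℕ)) n with hlt | heq | hgt
      · rw [IH _ hlt j rfl, smul_zero]
      · exact absurd (Fin.ext (heq.trans hk.symm)) hj
      · rw [zbinom_nat_lt hgt, zero_smul]
    · intro hk'; exact absurd (Finset.mem_univ k) hk'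

/-- `4 Y_k = (-1)^k [X_k, X_0]` in the Onsager algebra. -/
lemma four_Ye (k : ℕ) : (4 : ℂ) • Ye k = ((-1 : ℂ) ^ k) • ⁅Xe k, Xe 0⁆ := by
  apply Subtype.ext
  have hco : ((⁅Xe k, Xe 0⁆ : OA) : Loop) = ⁅((Xe k : OA) : Loop), ((Xe 0 : OA) : Loop)⁆ := rfl
  show (4 : ℂ) • ((Ye k : OA) : Loop) = ((-1 : ℂ) ^ k) • ((⁅Xe k, Xe 0⁆ : OA) : Loop)
  rw [hco, Ring.lie_def, Xe_coe, Xe_coe, Ye_coe]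
  ext i j : 1
  fin_cases i <;> fin_cases j <;>
    simp [Matrix.mul_apply, Fin.sum_univ_two, smul_eq_C_mul, map_ofNat, map_pow] <;>
    ring_nf

lemma sum_smul_two_pow (m : ℤ) (L : ℕ) (s : R) :
    ∑ k : Fin L, zbinom m (k : ℕ) • (2 * s ^ (k : ℕ)) =
      2 * ∑ k ∈ Finset.range L, LaurentPolynomial.C (zbinom m k) * s ^ k := by
  rw [Finset.mul_sum,
    ← Fin.sum_univ_eq_sum_range (fun k => 2 * (LaurentPolynomial.C (zbinom m k) * s ^ k)) L]
  refine Finset.sum_congr rfl fun k _ => ?_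
  rw [smul_eq_C_mul]; ring

lemma sum_smul_Ye_pow (m : ℤ) (L : ℕ) :
    ∑ k : Fin L, ((-1 : ℂ) ^ (k : ℕ) * zbinom m (k : ℕ)) •
        (LaurentPolynomial.C ((-1 : ℂ) ^ (k : ℕ)) * (s1 ^ (k : ℕ) - s2 ^ (k : ℕ))) =
      (∑ k ∈ Finset.range L, LaurentPolynomial.C (zbinom m k) * s1 ^ k) -
        (∑ k ∈ Finset.range L, LaurentPolynomial.C (zbinom m k) * s2 ^ k) := by
  rw [← Finset.sum_sub_distrib,
    ← Fin.sum_univ_eq_sum_range (fun k =>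
        LaurentPolynomial.C (zbinom m k) * s1 ^ k -
          LaurentPolynomial.C (zbinom m k) * s2 ^ k) L]
  refine Finset.sum_congr rfl fun k _ => ?_
  rw [smul_eq_C_mul, map_mul]
  have hsq : (LaurentPolynomial.C ((-1 : ℂ) ^ (k : ℕ)) : R) *
      LaurentPolynomial.C ((-1 : ℂ) ^ (k : ℕ)) = 1 := by
    rw [← map_mul, ← mul_pow]; norm_num
  linear_combination
    (LaurentPolynomial.C (zbinom m (k : ℕ)) * (s1 ^ (k : ℕ) - s2 ^ (k : ℕ))) * hsq

/-- **Lemma 6 of Date–Roan.**  In `OA_L = OA/I_{(t-1)^L}` there are unique elements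
`X̲_k, Y̲_k` (`0 ≤ k < L`) with `π_L(A_m) = Σ_k C(m,k) X̲_k` and
`π_L(G_m) = Σ_k (-1)^k C(m,k) Y̲_k` for all `m ∈ ℤ`; moreover
`Y̲_k = ((-1)^k/4)[X̲_k, X̲_0]`. -/
theorem OA_L_generators (L : ℕ) (hL : 0 < L) :
    ∃ Xu Yu : Fin L → (OA ⧸ IP ((Polynomial.X - 1) ^ L)),
      ((∀ m : ℤ,
          LieSubmodule.Quotient.mk (N := IP ((Polynomial.X - 1) ^ L)) (Am m) =
            ∑ k : Fin L, zbinom m (k : ℕ) • Xu k) ∧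
        (∀ m : ℤ,
          LieSubmodule.Quotient.mk (N := IP ((Polynomial.X - 1) ^ L)) (Gm m) =
            ∑ k : Fin L, ((-1 : ℂ) ^ (k : ℕ) * zbinom m (k : ℕ)) • Yu k)) ∧
      (∀ Xu' Yu' : Fin L → (OA ⧸ IP ((Polynomial.X - 1) ^ L)),
        ((∀ m : ℤ,
            LieSubmodule.Quotient.mk (N := IP ((Polynomial.X - 1) ^ L)) (Am m) =
              ∑ k : Fin L, zbinom m (k : ℕ) • Xu' k) ∧
          (∀ m : ℤ,
            LieSubmodule.Quotient.mk (N := IP ((Polynomial.X - 1) ^ L)) (Gm m) =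
              ∑ k : Fin L, ((-1 : ℂ) ^ (k : ℕ) * zbinom m (k : ℕ)) • Yu' k)) →
          Xu' = Xu ∧ Yu' = Yu) ∧
      (∀ k : Fin L, (4 : ℂ) • Yu k = ((-1 : ℂ) ^ (k : ℕ)) • ⁅Xu k, Xu ⟨0, hL⟩⁆) := by
  classical
  set P : Polynomial ℂ := (Polynomial.X - 1) ^ L with hPdef
  have hP : P.toLaurent = s1 ^ L := toLaurent_pow L
  -- matrix form of the defects
  have hxA : ∀ m : ℤ, ((Am m - ∑ k : Fin L, zbinom m (k : ℕ) • Xe (k : ℕ) : OA) : Loop)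
      = !![0, 2 * DD L m; 2 * inv (DD L m), 0] := by
    intro m
    have step1 : ∀ i j, ((Am m - ∑ k : Fin L, zbinom m (k : ℕ) • Xe (k : ℕ) : OA) : Loop) i j
        = entryL i j (Am m) - ∑ k : Fin L, zbinom m (k : ℕ) • entryL i j (Xe (k : ℕ)) := by
      intro i j
      rw [← entryL_apply, map_sub, map_sum]
      simp only [map_smul]
    refine Matrix.ext fun i j => ?_
    rw [step1]
    fin_cases i <;> fin_cases j <;>
      simp only [entryL_apply, Am_coe, Xe_coe, Matrix.of_apply, Matrix.cons_val', Matrix.cons_val_zero,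
        Matrix.cons_val_one, Matrix.head_cons, Matrix.head_fin_const, Matrix.empty_val',
        Matrix.cons_val_fin_one, Fin.mk_zero, Fin.mk_one, Fin.isValue, smul_zero,
        Finset.sum_const_zero, sub_zero, sub_self]
    · rw [sum_smul_two_pow]
      simp only [DD]
      ring
    · rw [sum_smul_two_pow, invert_DD]
      ring
  have hxG : ∀ m : ℤ,
      ((Gm m - ∑ k : Fin L, ((-1 : ℂ) ^ (k : ℕ) * zbinom m (k : ℕ)) • Ye (k : ℕ) : OA) : Loop)
      = !![DD L m - inv (DD L m), 0; 0, -(DD L m - inv (DD L m))] := by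
    intro m
    have step1 : ∀ i j,
        ((Gm m - ∑ k : Fin L, ((-1 : ℂ) ^ (k : ℕ) * zbinom m (k : ℕ)) • Ye (k : ℕ) : OA) : Loop) i j
        = entryL i j (Gm m) -
            ∑ k : Fin L, ((-1 : ℂ) ^ (k : ℕ) * zbinom m (k : ℕ)) • entryL i j (Ye (k : ℕ)) := by
      intro i j
      rw [← entryL_apply, map_sub, map_sum]
      simp only [map_smul]
    refine Matrix.ext fun i j => ?_
    rw [step1]
    fin_cases i <;> fin_cases j <;>
      simp only [entryL_apply, Gm_coe, Ye_coe, Matrix.of_apply, Matrix.cons_val', Matrix.cons_val_zero,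
        Matrix.cons_val_one, Matrix.head_cons, Matrix.head_fin_const, Matrix.empty_val',
        Matrix.cons_val_fin_one, Fin.mk_zero, Fin.mk_one, Fin.isValue, smul_zero,
        Finset.sum_const_zero, sub_zero, sub_self]
    · rw [sum_smul_Ye_pow, invert_DD]
      simp only [DD]
      ring
    · have : ∑ k : Fin L, ((-1 : ℂ) ^ (k : ℕ) * zbinom m (k : ℕ)) •
          -(LaurentPolynomial.C ((-1 : ℂ) ^ (k : ℕ)) * (s1 ^ (k : ℕ) - s2 ^ (k : ℕ))) =
          -∑ k : Fin L, ((-1 : ℂ) ^ (k : ℕ) * zbinom m (k : ℕ)) •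
            (LaurentPolynomial.C ((-1 : ℂ) ^ (k : ℕ)) * (s1 ^ (k : ℕ) - s2 ^ (k : ℕ))) := by
        rw [← Finset.sum_neg_distrib]
        exact Finset.sum_congr rfl fun k _ => (smul_neg _ _)
      rw [this, sum_smul_Ye_pow, invert_DD]
      simp only [DD]
      ring
  -- memberships
  have hmemA : ∀ m : ℤ, (Am m - ∑ k : Fin L, zbinom m (k : ℕ) • Xe (k : ℕ)) ∈ IP P := by
    intro m
    rw [mem_IP_iff]
    intro i j
    rw [hxA m, hP]
    fin_cases i <;> fin_cases j <;>
      simp only [Matrix.of_apply, Matrix.cons_val', Matrix.cons_val_zero, Matrix.cons_val_one, Matrix.head_cons,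
        Matrix.head_fin_const, Matrix.empty_val', Matrix.cons_val_fin_one, Fin.mk_zero, Fin.mk_one, Fin.isValue]
    · exact dvd_zero _
    · exact (key_dvd L hL m).mul_left 2
    · exact (key_dvd' L hL m).mul_left 2
    · exact dvd_zero _
  have hmemG : ∀ m : ℤ,
      (Gm m - ∑ k : Fin L, ((-1 : ℂ) ^ (k : ℕ) * zbinom m (k : ℕ)) • Ye (k : ℕ)) ∈ IP P := by
    intro m
    rw [mem_IP_iff]
    intro i j
    rw [hxG m, hP]
    fin_cases i <;> fin_cases j <;>
      simp only [Matrix.of_apply, Matrix.cons_val', Matrix.cons_val_zero, Matrix.cons_val_one, Matrix.head_cons,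
        Matrix.head_fin_const, Matrix.empty_val', Matrix.cons_val_fin_one, Fin.mk_zero, Fin.mk_one, Fin.isValue]
    · exact dvd_sub (key_dvd L hL m) (key_dvd' L hL m)
    · exact dvd_zero _
    · exact dvd_zero _
    · exact (dvd_sub (key_dvd L hL m) (key_dvd' L hL m)).neg_right
  -- the candidates
  refine ⟨fun k => LieSubmodule.Quotient.mk (N := IP P) (Xe (k : ℕ)),
    fun k => LieSubmodule.Quotient.mk (N := IP P) (Ye (k : ℕ)), ⟨?_, ?_⟩, ?_, ?_⟩
  · intro m
    have hs : ∑ k : Fin L, zbinom m (k : ℕ) •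
          LieSubmodule.Quotient.mk (N := IP P) (Xe (k : ℕ))
        = LieSubmodule.Quotient.mk (N := IP P)
            (∑ k : Fin L, zbinom m (k : ℕ) • Xe (k : ℕ)) := by
      simp only [← Submodule.mkQ_apply]
      rw [map_sum]
      exact Finset.sum_congr rfl fun x _ => (map_smul _ _ _).symm
    rw [hs, Submodule.Quotient.eq]
    exact hmemA m
  · intro m
    have hs : ∑ k : Fin L, ((-1 : ℂ) ^ (k : ℕ) * zbinom m (k : ℕ)) •
          LieSubmodule.Quotient.mk (N := IP P) (Ye (k : ℕ))
        = LieSubmodule.Quotient.mk (N := IP P)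
            (∑ k : Fin L, ((-1 : ℂ) ^ (k : ℕ) * zbinom m (k : ℕ)) • Ye (k : ℕ)) := by
      simp only [← Submodule.mkQ_apply]
      rw [map_sum]
      exact Finset.sum_congr rfl fun x _ => (map_smul _ _ _).symm
    rw [hs, Submodule.Quotient.eq]
    exact hmemG m
  · rintro Xu' Yu' ⟨hA', hG'⟩
    have hA : ∀ m : ℤ, LieSubmodule.Quotient.mk (N := IP P) (Am m) =
        ∑ k : Fin L, zbinom m (k : ℕ) • LieSubmodule.Quotient.mk (N := IP P) (Xe (k : ℕ)) := by
      intro m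
      have hs : ∑ k : Fin L, zbinom m (k : ℕ) •
            LieSubmodule.Quotient.mk (N := IP P) (Xe (k : ℕ))
          = LieSubmodule.Quotient.mk (N := IP P)
              (∑ k : Fin L, zbinom m (k : ℕ) • Xe (k : ℕ)) := by
        simp only [← Submodule.mkQ_apply]
        rw [map_sum]
        exact Finset.sum_congr rfl fun x _ => (map_smul _ _ _).symm
      rw [hs, Submodule.Quotient.eq]
      exact hmemA m
    have hG : ∀ m : ℤ, LieSubmodule.Quotient.mk (N := IP P) (Gm m) =
        ∑ k : Fin L, ((-1 : ℂ) ^ (k : ℕ) * zbinom m (k : ℕ)) •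
          LieSubmodule.Quotient.mk (N := IP P) (Ye (k : ℕ)) := by
      intro m
      have hs : ∑ k : Fin L, ((-1 : ℂ) ^ (k : ℕ) * zbinom m (k : ℕ)) •
            LieSubmodule.Quotient.mk (N := IP P) (Ye (k : ℕ))
          = LieSubmodule.Quotient.mk (N := IP P)
              (∑ k : Fin L, ((-1 : ℂ) ^ (k : ℕ) * zbinom m (k : ℕ)) • Ye (k : ℕ)) := by
        simp only [← Submodule.mkQ_apply]
        rw [map_sum]
        exact Finset.sum_congr rfl fun x _ => (map_smul _ _ _).symm
      rw [hs, Submodule.Quotient.eq]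
      exact hmemG m
    constructor
    · funext k
      have hv : ∀ m : ℤ, ∑ j : Fin L, zbinom m (j : ℕ) •
          (Xu' j - LieSubmodule.Quotient.mk (N := IP P) (Xe (j : ℕ))) = 0 := by
        intro m
        have h1 := (hA' m).symm.trans (hA m)
        calc ∑ j : Fin L, zbinom m (j : ℕ) •
              (Xu' j - LieSubmodule.Quotient.mk (N := IP P) (Xe (j : ℕ)))
            = ∑ j : Fin L, (zbinom m (j : ℕ) • Xu' j -
                zbinom m (j : ℕ) • LieSubmodule.Quotient.mk (N := IP P) (Xe (j : ℕ))) := by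
              exact Finset.sum_congr rfl fun j _ => smul_sub _ _ _
          _ = 0 := by rw [Finset.sum_sub_distrib, h1, sub_self]
      have := lin_indep _ hv k
      rw [sub_eq_zero] at this
      exact this
    · funext k
      have hv : ∀ m : ℤ, ∑ j : Fin L, zbinom m (j : ℕ) •
          ((-1 : ℂ) ^ (j : ℕ) • (Yu' j - LieSubmodule.Quotient.mk (N := IP P) (Ye (j : ℕ)))) = 0 := by
        intro m
        have h1 := (hG' m).symm.trans (hG m)
        calc ∑ j : Fin L, zbinom m (j : ℕ) •
              ((-1 : ℂ) ^ (j : ℕ) • (Yu' j - LieSubmodule.Quotient.mk (N := IP P) (Ye (j : ℕ))))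
            = ∑ j : Fin L, (((-1 : ℂ) ^ (j : ℕ) * zbinom m (j : ℕ)) • Yu' j -
                ((-1 : ℂ) ^ (j : ℕ) * zbinom m (j : ℕ)) •
                  LieSubmodule.Quotient.mk (N := IP P) (Ye (j : ℕ))) := by
              refine Finset.sum_congr rfl fun j _ => ?_
              rw [smul_smul, mul_comm, smul_sub]
          _ = 0 := by rw [Finset.sum_sub_distrib, h1, sub_self]
      have hw := lin_indep _ hv k
      have h2 : ((-1 : ℂ) ^ (k : ℕ) * (-1 : ℂ) ^ (k : ℕ)) = 1 := by
        rw [← mul_pow]; norm_num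
      have h3 := congrArg (fun z => ((-1 : ℂ) ^ (k : ℕ)) • z) hw
      simp only [smul_smul, h2, one_smul, smul_zero] at h3
      rw [sub_eq_zero] at h3
      exact h3
  · intro k
    have h4 := four_Ye (k : ℕ)
    have hmk : (4 : ℂ) • (LieSubmodule.Quotient.mk (N := IP P) (Ye (k : ℕ))) =
        ((-1 : ℂ) ^ (k : ℕ)) • ⁅LieSubmodule.Quotient.mk (N := IP P) (Xe (k : ℕ)),
          LieSubmodule.Quotient.mk (N := IP P) (Xe 0)⁆ :=
      calc (4 : ℂ) • (LieSubmodule.Quotient.mk (N := IP P) (Ye (k : ℕ)))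
          = LieSubmodule.Quotient.mk (N := IP P) ((4 : ℂ) • Ye (k : ℕ)) := by
            simp only [← Submodule.mkQ_apply]
            exact (map_smul _ _ _).symm
        _ = LieSubmodule.Quotient.mk (N := IP P) (((-1 : ℂ) ^ (k : ℕ)) • ⁅Xe (k : ℕ), Xe 0⁆) := by
            rw [h4]
        _ = ((-1 : ℂ) ^ (k : ℕ)) • LieSubmodule.Quotient.mk (N := IP P) ⁅Xe (k : ℕ), Xe 0⁆ := by
            simp only [← Submodule.mkQ_apply]
            exact map_smul _ _ _
        _ = ((-1 : ℂ) ^ (k : ℕ)) • ⁅LieSubmodule.Quotient.mk (N := IP P) (Xe (k : ℕ)),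
              LieSubmodule.Quotient.mk (N := IP P) (Xe 0)⁆ := by
            rw [LieSubmodule.Quotient.mk_bracket]
    exact hmk

end Onsager
end
end
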